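/- For any finite poset P which is not a chain, dim(P) ≤ width(P). -/

import Mathlib

/-- `x` and `y` are incomparable elements of a poset. -/
def Incomp {α : Type*} [PartialOrder α] (x y : α) : Prop := ¬ x ≤ y ∧ ¬ y ≤ x

/-- `r` is a linear extension of the partial order on `α`. -/
def IsLinearExtension {α : Type*} [PartialOrder α] (r : α → α → Prop) : Prop :=
  IsLinearOrder α r ∧ ∀ x y : α, x ≤ y → r x y

/-- `α` admits a realizer consisting of `d` linear extensions. -/
def RealizerOfSize (α : Type*) [PartialOrder α] (d : ℕ) : Prop :=
  ∃ L : Fin d → (α → α → Prop), (∀ i, IsLinearExtension (L i)) ∧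
    ∀ x y : α, x ≤ y ↔ ∀ i, L i x y

/-- The Dushnik–Miller dimension: the least positive integer `d`
for which the order is the intersection of `d` linear extensions. -/
noncomputable def dimP (α : Type*) [PartialOrder α] : ℕ :=
  sInf {d | 0 < d ∧ RealizerOfSize α d}


section Aux

open Finset
open scoped Classical

lemma chain_ext {α : Type*} [PartialOrder α] (C : Finset α) :
    ∃ r : α → α → Prop, IsLinearExtension r ∧
      ((∀ x ∈ C, ∀ y ∈ C, x ≤ y ∨ y ≤ x) →
        ∀ x ∈ C, ∀ y, Incomp x y → r y x) := by
  by_cases hch : ∀ x ∈ C, ∀ y ∈ C, x ≤ y ∨ y ≤ x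
  · -- construction
    set S : α → α → Prop := fun x y => x < y ∨ (y ∈ C ∧ Incomp x y) with hS
    set T : α → α → Prop := fun x y => Relation.TransGen S x y with hT
    have key : ∀ x y, T x y → x < y ∨ ∃ c ∈ C, Incomp x c ∧ c ≤ y := by
      intro x y h
      induction h with
      | single hs =>
        rcases hs with h1 | ⟨hyC, hinc⟩
        · exact Or.inl h1
        · exact Or.inr ⟨_, hyC, hinc, le_refl _⟩
      | tail _ hs ih =>
        rename_i b cc _
        rcases ih with hxb | ⟨c, hcC, hinc, hcb⟩
        · rcases hs with h1 | ⟨hcC, hinc⟩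
          · exact Or.inl (hxb.trans h1)
          · -- x < b, Incomp b cc, cc ∈ C
            by_cases hzx : cc ≤ x
            · exact absurd (hzx.trans hxb.le) hinc.2
            · by_cases hxz : x ≤ cc
              · refine Or.inl (lt_of_le_of_ne hxz ?_)
                rintro rfl; exact hinc.2 hxb.le
              · exact Or.inr ⟨cc, hcC, ⟨hxz, hzx⟩, le_refl _⟩
        · rcases hs with h1 | ⟨hccC, hinc2⟩
          · exact Or.inr ⟨c, hcC, hinc, hcb.trans h1.le⟩
          · -- c ≤ b, Incomp b cc, cc ∈ C, c ∈ C
            have hccc : c ≤ cc := by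
              rcases hch c hcC cc hccC with h | h
              · exact h
              · exact absurd (h.trans hcb) hinc2.2
            by_cases hzx : cc ≤ x
            · exact absurd (hccc.trans hzx) hinc.2
            · by_cases hxz : x ≤ cc
              · refine Or.inl (lt_of_le_of_ne hxz ?_)
                rintro rfl; exact hinc.2 hccc
              · exact Or.inr ⟨cc, hccC, ⟨hxz, hzx⟩, le_refl _⟩
    have hirr : ∀ x, ¬ T x x := by
      intro x hx
      rcases key x x hx with h | ⟨c, _, hinc, hcx⟩
      · exact lt_irrefl _ h
      · exact hinc.2 hcx
    set R : α → α → Prop := fun x y => x = y ∨ T x y with hR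
    haveI : IsRefl α R := ⟨fun x => Or.inl rfl⟩
    haveI : IsTrans α R := by
      constructor
      rintro a b c (rfl | hab) (rfl | hbc)
      · exact Or.inl rfl
      · exact Or.inr hbc
      · exact Or.inr hab
      · exact Or.inr (hab.trans hbc)
    haveI : IsAntisymm α R := by
      constructor
      rintro a b (rfl | hab) hba
      · rfl
      · rcases hba with rfl | hba
        · rfl
        · exact absurd (hab.trans hba) (hirr a)
    haveI : IsPreorder α R := ⟨⟩
    haveI : IsPartialOrder α R := ⟨⟩
    obtain ⟨r, hlin, hle⟩ := extend_partialOrder R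
    refine ⟨r, ⟨hlin, fun x y h => hle _ _ ?_⟩, fun _ x hxC y hinc => hle _ _ ?_⟩
    · rcases eq_or_lt_of_le h with rfl | h
      · exact Or.inl rfl
      · exact Or.inr (Relation.TransGen.single (Or.inl h))
    · exact Or.inr (Relation.TransGen.single (Or.inr ⟨hxC, hinc.2, hinc.1⟩))
  · obtain ⟨r, hlin, hle⟩ := extend_partialOrder ((· ≤ ·) : α → α → Prop)
    exact ⟨r, ⟨hlin, fun x y h => hle _ _ h⟩, fun h => absurd h hch⟩

variable {α : Type*} [PartialOrder α] [DecidableEq α]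


noncomputable def wd (s : Finset α) : ℕ :=
  (s.powerset.filter (fun t : Finset α => IsAntichain (· ≤ ·) (↑t : Set α))).sup Finset.card

lemma antichain_card_le_wd {s t : Finset α} (hts : t ⊆ s)
    (ht : IsAntichain (· ≤ ·) (t : Set α)) : t.card ≤ wd s := by
  apply Finset.le_sup (f := Finset.card)
  simp only [mem_filter, mem_powerset]
  exact ⟨hts, ht⟩

lemma wd_mono {s t : Finset α} (h : s ⊆ t) : wd s ≤ wd t := by
  apply Finset.sup_le
  intro b hb
  simp only [mem_filter, mem_powerset] at hb
  exact antichain_card_le_wd (hb.1.trans h) hb.2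

lemma wd_attained (s : Finset α) :
    ∃ t, t ⊆ s ∧ IsAntichain (· ≤ ·) (t : Set α) ∧ t.card = wd s := by
  have hne : ((s.powerset.filter (fun t : Finset α => IsAntichain (· ≤ ·) (↑t : Set α)))).Nonempty := by
    refine ⟨∅, ?_⟩
    simp only [mem_filter, mem_powerset]
    exact ⟨empty_subset _, by simp [IsAntichain]⟩
  obtain ⟨t, ht, hwd⟩ := Finset.exists_mem_eq_sup _ hne Finset.card
  simp only [mem_filter, mem_powerset] at ht
  exact ⟨t, ht.1, ht.2, by unfold wd; exact hwd.symm⟩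

lemma one_le_wd {s : Finset α} (h : s.Nonempty) : 1 ≤ wd s := by
  obtain ⟨x, hx⟩ := h
  have hanti : IsAntichain (· ≤ ·) (({x} : Finset α) : Set α) := by
    rw [Finset.coe_singleton]
    exact Set.pairwise_singleton _ _
  have := antichain_card_le_wd (t := {x}) (by simpa using hx) hanti
  simpa using this

lemma dilworth (s : Finset α) :
    ∃ c : Finset (Finset α), c.card ≤ wd s ∧
      (∀ C ∈ c, C ⊆ s ∧ ∀ x ∈ C, ∀ y ∈ C, x ≤ y ∨ y ≤ x) ∧
      (∀ C ∈ c, ∀ D ∈ c, C ≠ D → Disjoint C D) ∧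
      (∀ x ∈ s, ∃ C ∈ c, x ∈ C) := by
  induction s using Finset.strongInduction with
  | _ s ih =>
  rcases s.eq_empty_or_nonempty with rfl | hne
  · exact ⟨∅, by simp, by simp, by simp, by simp⟩
  obtain ⟨m, hm, hmax⟩ := s.exists_maximal hne
  set s' := s.erase m with hs'
  have hms' : m ∉ s' := notMem_erase _ _
  have hsub' : s' ⊆ s := erase_subset _ _
  obtain ⟨c', hcard', hchains', hdisj', hcover'⟩ := ih s' (erase_ssubset hm)
  set k := wd s' with hk
  by_cases hwk : k + 1 ≤ wd s
  · refine ⟨insert {m} c', ?_, ?_, ?_, ?_⟩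
    · calc (insert {m} c').card ≤ c'.card + 1 := card_insert_le _ _
        _ ≤ k + 1 := by omega
        _ ≤ wd s := hwk
    · intro C hC
      rcases mem_insert.1 hC with rfl | hC
      · exact ⟨by simpa using hm, by intro x hx y hy; simp_all⟩
      · exact ⟨(hchains' C hC).1.trans hsub', (hchains' C hC).2⟩
    · intro C hC D hD hne'
      have hsingdisj : ∀ E ∈ c', Disjoint ({m} : Finset α) E := by
        intro E hE
        refine Finset.disjoint_left.2 ?_
        intro z hz hz'
        rw [mem_singleton] at hz
        rw [hz] at hz'
        exact hms' ((hchains' E hE).1 hz')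
      rcases mem_insert.1 hC with rfl | hC'
      · rcases mem_insert.1 hD with rfl | hD'
        · exact absurd rfl hne'
        · exact hsingdisj D hD'
      · rcases mem_insert.1 hD with rfl | hD'
        · exact (hsingdisj C hC').symm
        · exact hdisj' C hC' D hD' hne'
    · intro x hx
      by_cases hxm : x = m
      · exact ⟨{m}, mem_insert_self _ _, by simp [hxm]⟩
      · obtain ⟨C, hC, hxC⟩ := hcover' x (mem_erase.2 ⟨hxm, hx⟩)
        exact ⟨C, mem_insert_of_mem hC, hxC⟩
  · -- wd s = k
    have hwds : wd s = k := le_antisymm (by omega) (wd_mono hsub')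
    have hk1 : 1 ≤ k := hwds ▸ one_le_wd hne
    obtain ⟨A, hAs', hAanti, hAcard⟩ := wd_attained s'
    -- counting: any k-antichain of s' meets each chain; card c' = k
    have hcount : ∀ B : Finset α, B ⊆ s' → IsAntichain (· ≤ ·) (B : Set α) → B.card = k →
        k ≤ ∑ C ∈ c', (B ∩ C).card := by
      intro B hBs hBa hBc
      have hsub : B ⊆ c'.biUnion (fun C => B ∩ C) := by
        intro x hx
        obtain ⟨C, hC, hxC⟩ := hcover' x (hBs hx)
        exact mem_biUnion.2 ⟨C, hC, mem_inter.2 ⟨hx, hxC⟩⟩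
      calc k = B.card := hBc.symm
        _ ≤ (c'.biUnion (fun C => B ∩ C)).card := card_le_card hsub
        _ ≤ ∑ C ∈ c', (B ∩ C).card := card_biUnion_le
    have hone : ∀ (B : Finset α), IsAntichain (· ≤ ·) (B : Set α) →
        ∀ C ∈ c', (B ∩ C).card ≤ 1 := by
      intro B hBa C hC
      refine Finset.card_le_one.2 ?_
      intro a ha b hb
      simp only [mem_inter] at ha hb
      rcases (hchains' C hC).2 a ha.2 b hb.2 with h | h
      · by_contra hab
        exact hBa ha.1 hb.1 hab h
      · by_contra hab
        exact hBa hb.1 ha.1 (Ne.symm hab) h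
    have hcc : c'.card = k := by
      have h1 := hcount A hAs' hAanti hAcard
      have h2 : ∑ C ∈ c', (A ∩ C).card ≤ c'.card := by
        calc ∑ C ∈ c', (A ∩ C).card ≤ ∑ _C ∈ c', 1 :=
          Finset.sum_le_sum (hone A hAanti)
          _ = c'.card := by simp
      omega
    have hmeets : ∀ B : Finset α, B ⊆ s' → IsAntichain (· ≤ ·) (B : Set α) → B.card = k →
        ∀ C ∈ c', ∃ x, x ∈ C ∧ x ∈ B := by
      intro B hBs hBa hBc C hC
      have h1 := hcount B hBs hBa hBc
      have heq : ∑ C ∈ c', (B ∩ C).card = ∑ _C ∈ c', 1 := by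
        have h2 : ∑ C ∈ c', (B ∩ C).card ≤ ∑ _C ∈ c', 1 :=
          Finset.sum_le_sum (hone B hBa)
        have : ∑ _C ∈ c', (1:ℕ) = c'.card := by simp
        omega
      have := (Finset.sum_eq_sum_iff_of_le (hone B hBa)).1 heq C hC
      have hne' : (B ∩ C).Nonempty := by
        rw [← Finset.card_pos, this]
        omega
      obtain ⟨x, hx⟩ := hne'
      simp only [mem_inter] at hx
      exact ⟨x, hx.2, hx.1⟩
    -- the property P
    set P : α → Prop := fun x => ∃ B : Finset α, B ⊆ s' ∧ IsAntichain (· ≤ ·) (B : Set α) ∧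
      B.card = k ∧ x ∈ B with hP
    haveI : Inhabited α := ⟨m⟩
    have ha : ∀ C ∈ c', ∃ aC, aC ∈ C ∧ P aC ∧ ∀ y ∈ C, P y → y ≤ aC := by
      intro C hC
      have hFne : (C.filter P).Nonempty := by
        obtain ⟨x, hxC, hxA⟩ := hmeets A hAs' hAanti hAcard C hC
        exact ⟨x, mem_filter.2 ⟨hxC, A, hAs', hAanti, hAcard, hxA⟩⟩
      obtain ⟨aC, haF, hamax⟩ := (C.filter P).exists_maximal hFne
      simp only [mem_filter] at haF
      refine ⟨aC, haF.1, haF.2, ?_⟩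
      intro y hy hPy
      have hyF : y ∈ C.filter P := mem_filter.2 ⟨hy, hPy⟩
      rcases (hchains' C hC).2 y hy aC haF.1 with h | h
      · exact h
      · rcases eq_or_lt_of_le h with h | h
        · exact h.ge
        · exact (lt_irrefl _ (h.trans_le (hamax hyF h.le))).elim
    choose! a ha1 ha2 ha3 using ha
    set Astar : Finset α := c'.attach.image (fun C => a C.1) with hAstar
    have hinj : ∀ C : {x // x ∈ c'}, ∀ D : {x // x ∈ c'}, a C.1 = a D.1 → C = D := by
      intro C D hCD
      by_contra hne'
      have hne'' : C.1 ≠ D.1 := fun h => hne' (Subtype.ext h)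
      have := hdisj' C.1 C.2 D.1 D.2 hne''
      exact (Finset.disjoint_left.1 this (ha1 C.1 C.2)) (hCD ▸ ha1 D.1 D.2)
    have hAstarcard : Astar.card = k := by
      rw [hAstar, Finset.card_image_of_injective _ (fun C D => hinj C D), card_attach, hcc]
    have hAstars' : Astar ⊆ s' := by
      intro x hx
      simp only [hAstar, mem_image, mem_attach, true_and, Subtype.exists] at hx
      obtain ⟨C, hC, rfl⟩ := hx
      exact (hchains' C hC).1 (ha1 C hC)
    have hAstaranti : IsAntichain (· ≤ ·) (Astar : Set α) := by
      intro u hu v hv huv hle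
      simp only [hAstar, coe_image, Set.mem_image, mem_coe, mem_attach, true_and,
        Set.mem_setOf_eq] at hu hv
      obtain ⟨⟨C, hC⟩, rfl⟩ := hu
      obtain ⟨⟨D, hD⟩, rfl⟩ := hv
      obtain ⟨B, hBs, hBa, hBc, hvB⟩ := ha2 D hD
      obtain ⟨x, hxC, hxB⟩ := hmeets B hBs hBa hBc C hC
      have hxa : x ≤ a C := ha3 C hC x hxC ⟨B, hBs, hBa, hBc, hxB⟩
      have hxv : x ≤ a D := hxa.trans hle
      by_cases hxd : x = a D
      · exact huv (le_antisymm hle (hxd ▸ hxa))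
      · exact hBa hxB hvB hxd hxv
    -- m is comparable with some element of Astar
    have hcomp : ∃ u ∈ Astar, u ≤ m := by
      by_contra hcon
      push_neg at hcon
      have hmAstar : m ∉ Astar := fun h => hms' (hAstars' h)
      have hup : ∀ u ∈ Astar, ¬ m ≤ u := by
        intro u hu hmu
        have hune : u ≠ m := fun h => hcon u hu (h.le)
        exact lt_irrefl _ ((lt_of_le_of_ne hmu (Ne.symm hune)).trans_le (hmax (hsub' (hAstars' hu)) hmu))
      have hanti2 : IsAntichain (· ≤ ·) ((insert m Astar : Finset α) : Set α) := by
        intro u hu v hv hne2 hle2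
        simp only [coe_insert, Set.mem_insert_iff, mem_coe] at hu hv
        rcases hu with rfl | hu
        · rcases hv with rfl | hv
          · exact hne2 rfl
          · exact hup v hv hle2
        · rcases hv with rfl | hv
          · exact hcon u hu hle2
          · exact hAstaranti hu hv hne2 hle2
      have hcardins : (insert m Astar).card = k + 1 := by
        rw [card_insert_of_notMem hmAstar, hAstarcard]
      have hins_sub : insert m Astar ⊆ s := by
        intro z hz
        rcases mem_insert.1 hz with rfl | hz
        · exact hm
        · exact hsub' (hAstars' hz)
      have := antichain_card_le_wd hins_sub hanti2
      rw [hcardins, hwds] at this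
      omega
    obtain ⟨u, huA, hum⟩ := hcomp
    obtain ⟨C₀, hC₀mem, hu_eq⟩ : ∃ C₀ ∈ c', a C₀ = u := by
      simp only [hAstar, mem_image, mem_attach, true_and, Subtype.exists] at huA
      obtain ⟨C₀, hC₀, h⟩ := huA
      exact ⟨C₀, hC₀, h⟩
    set K : Finset α := insert m (C₀.filter (fun x => x ≤ u)) with hK
    have hKs : K ⊆ s := by
      intro z hz
      rcases mem_insert.1 hz with rfl | hz
      · exact hm
      · exact hsub' ((hchains' C₀ hC₀mem).1 (mem_filter.1 hz).1)
    have hKchain : ∀ x ∈ K, ∀ y ∈ K, x ≤ y ∨ y ≤ x := by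
      intro x hx y hy
      simp only [hK, mem_insert, mem_filter] at hx hy
      rcases hx with rfl | ⟨hxC, hxu⟩
      · rcases hy with rfl | ⟨hyC, hyu⟩
        · exact Or.inl le_rfl
        · exact Or.inr (hyu.trans hum)
      · rcases hy with rfl | ⟨hyC, hyu⟩
        · exact Or.inl (hxu.trans hum)
        · exact (hchains' C₀ hC₀mem).2 x hxC y hyC
    have hmK : m ∈ K := mem_insert_self _ _
    have hwdK : wd (s \ K) ≤ k - 1 := by
      have hbound : ∀ B : Finset α, B ⊆ s \ K → IsAntichain (· ≤ ·) (B : Set α) →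
          B.card ≤ k - 1 := by
        intro B hB hBanti
        by_contra hcard
        push_neg at hcard
        have hBsub : B ⊆ s := hB.trans (sdiff_subset)
        have hBle : B.card ≤ k := hwds ▸ antichain_card_le_wd hBsub hBanti
        have hBk : B.card = k := by omega
        have hBs' : B ⊆ s' := by
          intro z hz
          have hzs := hBsub hz
          have hzK : z ∉ K := (mem_sdiff.1 (hB hz)).2
          exact mem_erase.2 ⟨fun h => hzK (h ▸ hmK), hzs⟩
        obtain ⟨x, hxC₀, hxB⟩ := hmeets B hBs' hBanti hBk C₀ hC₀mem
        have hxu : x ≤ u := hu_eq ▸ ha3 C₀ hC₀mem x hxC₀ ⟨B, hBs', hBanti, hBk, hxB⟩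
        have hxK : x ∈ K := mem_insert_of_mem (mem_filter.2 ⟨hxC₀, hxu⟩)
        exact (mem_sdiff.1 (hB hxB)).2 hxK
      apply Finset.sup_le
      intro b hb
      simp only [mem_filter, mem_powerset] at hb
      exact hbound b hb.1 hb.2
    have hssub : s \ K ⊂ s := by
      refine Finset.ssubset_iff_of_subset (sdiff_subset) |>.2 ⟨m, hm, ?_⟩
      simp [hmK]
    obtain ⟨c'', hcard'', hchains'', hdisj'', hcover''⟩ := ih (s \ K) hssub
    refine ⟨insert K c'', ?_, ?_, ?_, ?_⟩
    · calc (insert K c'').card ≤ c''.card + 1 := card_insert_le _ _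
        _ ≤ (k - 1) + 1 := by
          have := hcard''.trans hwdK
          omega
        _ = k := by omega
        _ = wd s := hwds.symm
    · intro C hC
      rcases mem_insert.1 hC with rfl | hC
      · exact ⟨hKs, hKchain⟩
      · exact ⟨(hchains'' C hC).1.trans (sdiff_subset), (hchains'' C hC).2⟩
    · intro C hC D hD hne2
      have hKdisj : ∀ E ∈ c'', Disjoint K E := by
        intro E hE
        refine Finset.disjoint_left.2 ?_
        intro z hz hz'
        exact (mem_sdiff.1 ((hchains'' E hE).1 hz')).2 hz
      rcases mem_insert.1 hC with rfl | hC'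
      · rcases mem_insert.1 hD with rfl | hD'
        · exact absurd rfl hne2
        · exact hKdisj D hD'
      · rcases mem_insert.1 hD with rfl | hD'
        · exact (hKdisj C hC').symm
        · exact hdisj'' C hC' D hD' hne2
    · intro x hx
      by_cases hxK : x ∈ K
      · exact ⟨K, mem_insert_self _ _, hxK⟩
      · obtain ⟨C, hC, hxC⟩ := hcover'' x (mem_sdiff.2 ⟨hx, hxK⟩)
        exact ⟨C, mem_insert_of_mem hC, hxC⟩

end Aux

/-- For any finite poset `P` which is not a chain, `dim P ≤ width P`,
where the width is the maximum size of an antichain. -/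
theorem stmt_9 (α : Type*) [PartialOrder α] [Fintype α]
    (hnotchain : ¬ ∀ x y : α, x ≤ y ∨ y ≤ x) :
    dimP α ≤ sSup {k : ℕ | ∃ s : Finset α, IsAntichain (· ≤ ·) (s : Set α) ∧ s.card = k} := by
  classical
  push_neg at hnotchain
  obtain ⟨x₀, y₀, hxy₀, hyx₀⟩ := hnotchain
  haveI : Nonempty α := ⟨x₀⟩
  set w : ℕ := wd (Finset.univ : Finset α) with hw
  have hw0 : 0 < w := one_le_wd Finset.univ_nonempty
  -- the sSup equals w
  have hsup : sSup {k : ℕ | ∃ s : Finset α, IsAntichain (· ≤ ·) (s : Set α) ∧ s.card = k} = w := by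
    apply le_antisymm
    · apply csSup_le
      · exact ⟨0, ∅, by simp [IsAntichain], by simp⟩
      rintro k ⟨s, hs, rfl⟩
      exact antichain_card_le_wd (Finset.subset_univ s) hs
    · obtain ⟨t, _, hta, htc⟩ := wd_attained (Finset.univ : Finset α)
      apply le_csSup
      · exact ⟨w, by rintro k ⟨s, hs, rfl⟩; exact antichain_card_le_wd (Finset.subset_univ s) hs⟩
      · exact ⟨t, hta, htc⟩
  rw [hsup]
  -- build a realizer of size w from a Dilworth chain cover
  obtain ⟨c, hccard, hchains, _, hcover⟩ := dilworth (Finset.univ : Finset α)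
  set l : List (Finset α) := c.toList with hl
  have hllen : l.length ≤ w := by
    rw [hl, Finset.length_toList]
    exact hccard
  set g : Fin w → Finset α := fun i =>
    if h : (i : ℕ) < l.length then l.get ⟨i, h⟩ else ∅ with hg
  have hgchain : ∀ i, ∀ x ∈ g i, ∀ y ∈ g i, x ≤ y ∨ y ≤ x := by
    intro i
    by_cases h : (i : ℕ) < l.length
    · have hmem : l.get ⟨i, h⟩ ∈ c := by
        rw [← Finset.mem_toList]
        exact List.get_mem _ _
      simpa [hg, h] using (hchains _ hmem).2
    · simp [hg, h]
  have hgcover : ∀ x : α, ∃ i, x ∈ g i := by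
    intro x
    obtain ⟨C, hC, hxC⟩ := hcover x (Finset.mem_univ x)
    obtain ⟨n, hn⟩ := List.mem_iff_get.1 (Finset.mem_toList.2 hC)
    refine ⟨⟨(n : ℕ), lt_of_lt_of_le n.2 hllen⟩, ?_⟩
    have hlt : ((⟨(n : ℕ), lt_of_lt_of_le n.2 hllen⟩ : Fin w) : ℕ) < l.length := n.2
    simp only [hg, hlt, dif_pos]
    convert hn ▸ hxC
  choose L hL using fun i => chain_ext (g i)
  have hLlin : ∀ i, IsLinearExtension (L i) := fun i => (hL i).1
  have hrel : RealizerOfSize α w := by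
    refine ⟨L, hLlin, ?_⟩
    intro x y
    constructor
    · intro h i
      exact (hLlin i).2 x y h
    · intro h
      by_contra hxy
      by_cases hyx : y ≤ x
      · have i0 : Fin w := ⟨0, hw0⟩
        have heq : x = y :=
          haveI := (hLlin i0).1; antisymm (r := L i0) (h i0)
            ((hLlin i0).2 y x hyx)
        exact hxy (heq ▸ le_refl x)
      · obtain ⟨i, hxi⟩ := hgcover x
        have hLyx : L i y x := (hL i).2 (hgchain i) x hxi y ⟨hxy, hyx⟩
        have heq : x = y :=
          haveI := (hLlin i).1; antisymm (r := L i) (h i) hLyx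
        exact hxy (heq ▸ le_refl x)
  exact Nat.sInf_le ⟨hw0, hrel⟩
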